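/- Let L be an n-dimensional nilpotent Lie algebra of coclass 3 (i.e., of nilpotency class n − 3) over a field 𝔽 with n ≥ 6. Then 1 ≤ dim Z(L) ≤ 3 and 2 ≤ dim Z₂(L) ≤ 4. -/

import Mathlib

section Aux

variable {F L : Type*} [Field F] [LieRing L] [LieAlgebra F L]

open LieModule Module

lemma lcs_succ_le_submodule (j : ℕ) (S : Submodule F L)
    (h : ∀ x : L, ∀ m ∈ lowerCentralSeries F L L j, ⁅x, m⁆ ∈ S) :
    (lowerCentralSeries F L L (j + 1)).toSubmodule ≤ S := by
  rw [lowerCentralSeries_succ, LieSubmodule.lieIdeal_oper_eq_linear_span', Submodule.span_le]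
  rintro z ⟨x, -, n, hn, rfl⟩
  exact h x n hn

lemma lie_mem_lcs_succ (j : ℕ) {x m : L} (hm : m ∈ lowerCentralSeries F L L j) :
    ⁅x, m⁆ ∈ lowerCentralSeries F L L (j + 1) := by
  rw [lowerCentralSeries_succ]
  exact LieSubmodule.lie_mem_lie (LieSubmodule.mem_top x) hm

lemma lcs_stab {j c : ℕ} (h : lowerCentralSeries F L L (j + 1) = lowerCentralSeries F L L j)
    (hbot : lowerCentralSeries F L L c = ⊥) : lowerCentralSeries F L L j = ⊥ := by
  have key : ∀ i, lowerCentralSeries F L L (j + i) = lowerCentralSeries F L L j := by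
    intro i
    induction i with
    | zero => rfl
    | succ i ih =>
      have he : j + (i + 1) = (j + i) + 1 := by omega
      rw [he, lowerCentralSeries_succ, ih, ← lowerCentralSeries_succ, h]
  have h1 : lowerCentralSeries F L L j ≤ lowerCentralSeries F L L c := by
    rw [← key c]
    exact antitone_lowerCentralSeries F L L (by omega)
  rw [hbot] at h1
  exact le_bot_iff.mp h1

/-- If brackets of `L` with `W` land in `W₂`, then brackets of `L` with `lcs j ⊔ W` land
in `lcs (j+1) ⊔ W₂`. -/
lemma lie_mem_sup_step {W W₂ : Submodule F L}
    (hWW₂ : ∀ x : L, ∀ w ∈ W, ⁅x, w⁆ ∈ W₂) (j : ℕ) (x : L) {w : L}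
    (hw : w ∈ (lowerCentralSeries F L L j).toSubmodule ⊔ W) :
    ⁅x, w⁆ ∈ (lowerCentralSeries F L L (j + 1)).toSubmodule ⊔ W₂ := by
  obtain ⟨w₁, h1, w₂, h2, rfl⟩ := Submodule.mem_sup.mp hw
  rw [lie_add]
  exact add_mem (Submodule.mem_sup_left (lie_mem_lcs_succ j h1))
    (Submodule.mem_sup_right (hWW₂ x w₂ h2))

/-- If `lcs (j+1) ≤ lcs (j+2) ⊔ W₂` with `⁅L, W₂⁆ = 0`, then `lcs (j+2) = ⊥`. -/
lemma lcs_bot_of_le_sup {W₂ : Submodule F L}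
    (hW₂ : ∀ x : L, ∀ w ∈ W₂, ⁅x, w⁆ = 0) {j c : ℕ}
    (hbot : lowerCentralSeries F L L c = ⊥)
    (h : (lowerCentralSeries F L L (j + 1)).toSubmodule ≤
      (lowerCentralSeries F L L (j + 2)).toSubmodule ⊔ W₂) :
    lowerCentralSeries F L L (j + 2) = ⊥ := by
  have h2 : (lowerCentralSeries F L L (j + 2)).toSubmodule ≤
      (lowerCentralSeries F L L (j + 3)).toSubmodule := by
    apply lcs_succ_le_submodule
    intro x m hm
    obtain ⟨m₁, h1, m₂, hm2, rfl⟩ := Submodule.mem_sup.mp (h hm)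
    rw [lie_add, hW₂ x m₂ hm2, add_zero]
    exact lie_mem_lcs_succ _ h1
  have heq : lowerCentralSeries F L L (j + 3) = lowerCentralSeries F L L (j + 2) :=
    le_antisymm (antitone_lowerCentralSeries F L L (by omega))
      (by rwa [← LieSubmodule.toSubmodule_le_toSubmodule] )
  exact lcs_stab heq hbot

/-- The key sandwich lemma. -/
lemma sup_lcs_finrank_bound [FiniteDimensional F L] (W W₂ : Submodule F L)
    (hWW₂ : ∀ x : L, ∀ w ∈ W, ⁅x, w⁆ ∈ W₂)
    (hW₂ : ∀ x : L, ∀ w ∈ W₂, ⁅x, w⁆ = 0)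
    (m : ℕ) (hbot : lowerCentralSeries F L L (m + 3) = ⊥)
    (hne : lowerCentralSeries F L L (m + 2) ≠ ⊥) :
    finrank F ((lowerCentralSeries F L L (m + 1)).toSubmodule ⊔ W : Submodule F L) + (m + 2) ≤
      finrank F L := by
  have hlcs_ne : ∀ j, j ≤ m + 2 → lowerCentralSeries F L L j ≠ ⊥ := by
    intro j hj hbotj
    apply hne
    rw [← le_bot_iff, ← hbotj]
    exact antitone_lowerCentralSeries F L L hj
  -- first step: codimension of `lcs 1 ⊔ W` is at least 2
  have hfirst : finrank F ((lowerCentralSeries F L L 1).toSubmodule ⊔ W : Submodule F L) + 2 ≤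
      finrank F L := by
    by_contra hcon
    push_neg at hcon
    set P : Submodule F L := (lowerCentralSeries F L L 1).toSubmodule ⊔ W with hP
    have hq : finrank F (L ⧸ P) ≤ 1 := by
      have := P.finrank_quotient_add_finrank
      omega
    obtain ⟨v, hv⟩ := finrank_le_one_iff.mp hq
    obtain ⟨x₀, rfl⟩ := Submodule.Quotient.mk_surjective P v
    have hdecomp : ∀ y : L, ∃ c : F, y - c • x₀ ∈ P := by
      intro y
      obtain ⟨c, hc⟩ := hv (Submodule.Quotient.mk y)
      refine ⟨c, ?_⟩
      rw [← Submodule.Quotient.eq]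
      rw [← Submodule.Quotient.mk_smul] at hc
      exact hc.symm
    have hkey : ∀ z w : L, w ∈ P → ⁅z, w⁆ ∈
        (lowerCentralSeries F L L 2).toSubmodule ⊔ W₂ :=
      fun z w hw => lie_mem_sup_step hWW₂ 1 z hw
    have h1 : (lowerCentralSeries F L L 1).toSubmodule ≤
        (lowerCentralSeries F L L 2).toSubmodule ⊔ W₂ := by
      apply lcs_succ_le_submodule
      intro x y _
      obtain ⟨a, hx⟩ := hdecomp x
      obtain ⟨b, hy⟩ := hdecomp y
      have hxeq : x = a • x₀ + (x - a • x₀) := by abel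
      have hyeq : y = b • x₀ + (y - b • x₀) := by abel
      rw [hxeq, hyeq, lie_add, add_lie, add_lie]
      refine add_mem (add_mem ?_ ?_) (add_mem ?_ ?_)
      · rw [smul_lie, lie_smul, lie_self, smul_zero, smul_zero]
        exact zero_mem _
      · rw [← lie_skew]
        exact neg_mem (hkey _ _ hx)
      · exact hkey _ _ hy
      · exact hkey _ _ hy
    exact hlcs_ne 2 (by omega) (lcs_bot_of_le_sup hW₂ hbot (j := 0) h1)
  -- strict decrease of `lcs j ⊔ W`
  have hstrict : ∀ j, j + 2 ≤ m + 2 →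
      finrank F ((lowerCentralSeries F L L (j + 1)).toSubmodule ⊔ W : Submodule F L) + 1 ≤
      finrank F ((lowerCentralSeries F L L j).toSubmodule ⊔ W : Submodule F L) := by
    intro j hj
    have hlt : ((lowerCentralSeries F L L (j + 1)).toSubmodule ⊔ W : Submodule F L) <
        ((lowerCentralSeries F L L j).toSubmodule ⊔ W : Submodule F L) := by
      refine lt_of_le_of_ne (sup_le_sup_right ?_ W) ?_
      · rw [LieSubmodule.toSubmodule_le_toSubmodule]
        exact antitone_lowerCentralSeries F L L (by omega)
      intro heq
      have hle : (lowerCentralSeries F L L j).toSubmodule ≤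
          (lowerCentralSeries F L L (j + 1)).toSubmodule ⊔ W := by
        rw [heq]; exact le_sup_left
      have h1 : (lowerCentralSeries F L L (j + 1)).toSubmodule ≤
          (lowerCentralSeries F L L (j + 2)).toSubmodule ⊔ W₂ := by
        apply lcs_succ_le_submodule
        intro x n hn
        exact lie_mem_sup_step hWW₂ (j + 1) x (hle hn)
      exact hlcs_ne (j + 2) (by omega) (lcs_bot_of_le_sup hW₂ hbot h1)
    have := Submodule.finrank_lt_finrank_of_lt hlt
    omega
  -- induction
  have hchain : ∀ j, j ≤ m →
      finrank F ((lowerCentralSeries F L L (j + 1)).toSubmodule ⊔ W : Submodule F L) + (j + 2) ≤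
      finrank F L := by
    intro j
    induction j with
    | zero => intro _; exact hfirst
    | succ j ih =>
      intro hj
      have h1 := hstrict (j + 1) (by omega)
      have h2 := ih (by omega)
      omega
  exact hchain m le_rfl

end Aux


/-- The second center `Z₂(L) = {x ∈ L : ⁅x, y⁆ ∈ Z(L) for all y ∈ L}` of a Lie algebra `L`,
as a Lie subalgebra of `L`. -/
def secondCenter (F L : Type*) [Field F] [LieRing L] [LieAlgebra F L] : LieSubalgebra F L where
  carrier := {x : L | ∀ y : L, ⁅x, y⁆ ∈ LieAlgebra.center F L}
  add_mem' := fun {a b} ha hb y => by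
    rw [add_lie]; exact add_mem (ha y) (hb y)
  zero_mem' := fun y => by rw [zero_lie]; exact zero_mem _
  smul_mem' := fun c {x} hx y => by
    rw [smul_lie]; exact Submodule.smul_mem _ c (hx y)
  lie_mem' := fun {a b} ha hb y => by
    have h1 : ⁅a, ⁅b, y⁆⁆ = 0 := (LieModule.mem_maxTrivSubmodule F L L ⁅b, y⁆).mp (hb y) a
    have h2 : ⁅b, ⁅a, y⁆⁆ = 0 := (LieModule.mem_maxTrivSubmodule F L L ⁅a, y⁆).mp (ha y) b
    have h3 : ⁅⁅a, b⁆, y⁆ = 0 := by rw [lie_lie, h1, h2, sub_zero]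
    rw [h3]; exact zero_mem _

/-- Let `L` be an `n`-dimensional nilpotent Lie algebra of coclass `3` (i.e. of nilpotency class
`n − 3`) over a field `𝔽`, with `n ≥ 6`. Then `1 ≤ dim Z(L) ≤ 3` and `2 ≤ dim Z₂(L) ≤ 4`. -/
theorem center_second_center_dim_bounds_of_coclass_three {F L : Type*} [Field F] [LieRing L]
    [LieAlgebra F L] [FiniteDimensional F L]
    (n : ℕ) (hn : Module.finrank F L = n) (hn6 : 6 ≤ n)
    (hclass : LieModule.lowerCentralSeries F L L (n - 3) = ⊥)
    (hclass' : LieModule.lowerCentralSeries F L L (n - 4) ≠ ⊥) :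
    (1 ≤ Module.finrank F ↥(LieAlgebra.center F L) ∧
      Module.finrank F ↥(LieAlgebra.center F L) ≤ 3) ∧
    (2 ≤ Module.finrank F ↥(secondCenter F L) ∧
      Module.finrank F ↥(secondCenter F L) ≤ 4) := by
  obtain ⟨m, rfl⟩ : ∃ m, n = m + 6 := ⟨n - 6, by omega⟩
  rw [show m + 6 - 3 = m + 3 by omega] at hclass
  rw [show m + 6 - 4 = m + 2 by omega] at hclass'
  set Zs : Submodule F L := (LieAlgebra.center F L).toSubmodule with hZsdef
  set Z₂s : Submodule F L := (secondCenter F L).toSubmodule with hZ₂sdef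
  have hmemZ : ∀ x : L, x ∈ Zs ↔ ∀ y : L, ⁅y, x⁆ = 0 := fun x =>
    LieModule.mem_maxTrivSubmodule F L L x
  have hmemZ₂ : ∀ x : L, x ∈ Z₂s ↔ ∀ y : L, ⁅x, y⁆ ∈ LieAlgebra.center F L := fun x => Iff.rfl
  have hZeq : Module.finrank F ↥(LieAlgebra.center F L) = Module.finrank F Zs := rfl
  have hZ₂eq : Module.finrank F ↥(secondCenter F L) = Module.finrank F Z₂s := rfl
  rw [hZeq, hZ₂eq]
  -- the last nonzero term of the lower central series is contained in the center
  have hKZ : (LieModule.lowerCentralSeries F L L (m + 2)).toSubmodule ≤ Zs := by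
    intro x hx
    rw [LieSubmodule.mem_toSubmodule] at hx
    rw [hmemZ]
    intro y
    have h1 : ⁅y, x⁆ ∈ LieModule.lowerCentralSeries F L L (m + 3) := lie_mem_lcs_succ _ hx
    rw [hclass] at h1
    exact (LieSubmodule.mem_bot _).mp h1
  -- the next-to-last nonzero term is contained in the second center
  have hKZ₂ : (LieModule.lowerCentralSeries F L L (m + 1)).toSubmodule ≤ Z₂s := by
    intro x hx
    rw [LieSubmodule.mem_toSubmodule] at hx
    rw [hmemZ₂]
    intro y
    have h1 : ⁅y, x⁆ ∈ (LieModule.lowerCentralSeries F L L (m + 2)).toSubmodule :=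
      lie_mem_lcs_succ _ hx
    have h2 : ⁅y, x⁆ ∈ LieAlgebra.center F L := hKZ h1
    rw [← lie_skew]
    exact neg_mem h2
  -- the next-to-last nonzero term is not contained in the center
  have hKnotZ : ¬ (LieModule.lowerCentralSeries F L L (m + 1)).toSubmodule ≤ Zs := by
    intro hle
    apply hclass'
    rw [LieSubmodule.eq_bot_iff]
    intro z hz
    have h1 : (LieModule.lowerCentralSeries F L L (m + 2)).toSubmodule ≤ (⊥ : Submodule F L) := by
      apply lcs_succ_le_submodule
      intro x nn hnn
      have hz' : nn ∈ Zs := hle ((LieSubmodule.mem_toSubmodule _).mpr hnn)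
      rw [(hmemZ nn).mp hz' x]
      exact zero_mem _
    simpa using h1 ((LieSubmodule.mem_toSubmodule _).mpr hz)
  have hZZ₂ : Zs ≤ Z₂s := by
    intro x hx
    rw [hmemZ₂]
    intro y
    rw [← lie_skew, (hmemZ x).mp hx y, neg_zero]
    exact zero_mem _
  -- lower bound for the center
  have hZ1 : 1 ≤ Module.finrank F Zs := by
    rw [Nat.one_le_iff_ne_zero]
    intro h0
    apply hclass'
    rw [LieSubmodule.eq_bot_iff]
    intro z hz
    have hzZ : z ∈ Zs := hKZ ((LieSubmodule.mem_toSubmodule _).mpr hz)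
    rw [Submodule.finrank_eq_zero.mp h0] at hzZ
    simpa using hzZ
  -- upper bound for the center
  have hcb := sup_lcs_finrank_bound Zs Zs
    (fun x w hw => by rw [(hmemZ w).mp hw x]; exact zero_mem _)
    (fun x w hw => (hmemZ w).mp hw x) m hclass hclass'
  rw [hn] at hcb
  have hZlt : Module.finrank F Zs <
      Module.finrank F ((LieModule.lowerCentralSeries F L L (m + 1)).toSubmodule ⊔ Zs :
        Submodule F L) := by
    apply Submodule.finrank_lt_finrank_of_lt
    refine lt_of_le_of_ne le_sup_right ?_
    intro h
    exact hKnotZ (h ▸ le_sup_left)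
  -- bounds for the second center
  have h2b := sup_lcs_finrank_bound Z₂s Zs
    (fun x w hw => by
      rw [← lie_skew]
      exact neg_mem ((hmemZ₂ w).mp hw x))
    (fun x w hw => (hmemZ w).mp hw x) m hclass hclass'
  rw [hn, sup_eq_right.mpr hKZ₂] at h2b
  have hZ₂lt : Module.finrank F Zs < Module.finrank F Z₂s := by
    apply Submodule.finrank_lt_finrank_of_lt
    refine lt_of_le_of_ne hZZ₂ ?_
    intro h
    exact hKnotZ (h ▸ hKZ₂)
  exact ⟨⟨hZ1, by omega⟩, ⟨by omega, by omega⟩⟩
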